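/- Let N ≥ 1 and let λ : Fin N → ℝ be strictly positive. Define S̃(n) = log(Σ_k λ_k^n) − n·(Σ_k λ_k^n log λ_k)/(Σ_k λ_k^n) for real n. Then for every n > 0, S̃ is differentiable at n and its derivative equals S̃'(n) = −n · (Σ_{k<l} λ_k^n λ_l^n (log λ_k − log λ_l)²) / (Σ_k λ_k^n)², where the sum in the numerator is over unordered pairs of distinct indices k < l. -/

import Mathlib

open scoped BigOperators

/-- Lagrange-type identity for weighted variance. -/
lemma lagrange_pairs {N : ℕ} (a b : Fin N → ℝ) :
    (∑ k, a k * b k ^ 2) * (∑ k, a k) - (∑ k, a k * b k) ^ 2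
      = ∑ k, ∑ l ∈ Finset.univ.filter (fun l : Fin N => k < l),
          a k * a l * (b k - b l) ^ 2 := by
  have key : (2:ℝ) * (∑ k, ∑ l ∈ Finset.univ.filter (fun l : Fin N => k < l),
      a k * a l * (b k - b l) ^ 2)
      = ∑ k, ∑ l, a k * a l * (b k - b l) ^ 2 := by
    have h1 : (∑ k, ∑ l ∈ Finset.univ.filter (fun l : Fin N => k < l),
        a k * a l * (b k - b l) ^ 2)
        = ∑ p ∈ (Finset.univ ×ˢ Finset.univ : Finset (Fin N × Fin N)).filter
            (fun p => p.1 < p.2), a p.1 * a p.2 * (b p.1 - b p.2) ^ 2 := by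
      rw [Finset.sum_filter, Finset.sum_product]
      simp [Finset.sum_filter]
    have h2 : (∑ k, ∑ l ∈ Finset.univ.filter (fun l : Fin N => k < l),
        a k * a l * (b k - b l) ^ 2)
        = ∑ p ∈ (Finset.univ ×ˢ Finset.univ : Finset (Fin N × Fin N)).filter
            (fun p => p.2 < p.1), a p.1 * a p.2 * (b p.1 - b p.2) ^ 2 := by
      rw [h1]
      apply Finset.sum_nbij' (fun p => Prod.swap p) (fun p => Prod.swap p)
      · intro p hp; simp at hp ⊢; exact hp
      · intro p hp; simp at hp ⊢; exact hp
      · intro p _; simp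
      · intro p _; simp
      · intro p _; simp; ring
    have h3 : ∑ p ∈ (Finset.univ ×ˢ Finset.univ : Finset (Fin N × Fin N)).filter
        (fun p => ¬ p.1 < p.2 ∧ ¬ p.2 < p.1), a p.1 * a p.2 * (b p.1 - b p.2) ^ 2 = 0 := by
      apply Finset.sum_eq_zero
      intro p hp
      simp only [Finset.mem_filter] at hp
      have : p.1 = p.2 := le_antisymm (not_lt.1 hp.2.2) (not_lt.1 hp.2.1)
      rw [this]; ring
    have h4 : ∑ p ∈ (Finset.univ ×ˢ Finset.univ : Finset (Fin N × Fin N)),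
        a p.1 * a p.2 * (b p.1 - b p.2) ^ 2
        = (∑ p ∈ (Finset.univ ×ˢ Finset.univ : Finset (Fin N × Fin N)).filter
            (fun p => p.1 < p.2), a p.1 * a p.2 * (b p.1 - b p.2) ^ 2)
          + ((∑ p ∈ (Finset.univ ×ˢ Finset.univ : Finset (Fin N × Fin N)).filter
            (fun p => p.2 < p.1), a p.1 * a p.2 * (b p.1 - b p.2) ^ 2)
          + ∑ p ∈ (Finset.univ ×ˢ Finset.univ : Finset (Fin N × Fin N)).filter
            (fun p => ¬ p.1 < p.2 ∧ ¬ p.2 < p.1), a p.1 * a p.2 * (b p.1 - b p.2) ^ 2) := by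
      rw [← Finset.sum_filter_add_sum_filter_not
        (Finset.univ ×ˢ Finset.univ : Finset (Fin N × Fin N)) (fun p => p.1 < p.2)]
      congr 1
      rw [← Finset.sum_filter_add_sum_filter_not
        ((Finset.univ ×ˢ Finset.univ : Finset (Fin N × Fin N)).filter (fun p => ¬ p.1 < p.2))
        (fun p => p.2 < p.1), Finset.filter_filter, Finset.filter_filter]
      congr 2
      · ext p
        simp only [Finset.mem_filter, Finset.mem_product, Finset.mem_univ, true_and, and_true]
        exact ⟨fun h => h.2, fun h => ⟨lt_asymm h, h⟩⟩
    have h5 : ∑ p ∈ (Finset.univ ×ˢ Finset.univ : Finset (Fin N × Fin N)),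
        a p.1 * a p.2 * (b p.1 - b p.2) ^ 2 = ∑ k, ∑ l, a k * a l * (b k - b l) ^ 2 := by
      rw [Finset.sum_product]
    rw [← h5, h4, ← h1, ← h2, h3]; ring
  have expand : ∑ k, ∑ l, a k * a l * (b k - b l) ^ 2
      = 2 * ((∑ k, a k * b k ^ 2) * (∑ k, a k) - (∑ k, a k * b k) ^ 2) := by
    have hterm : ∀ k l : Fin N, a k * a l * (b k - b l) ^ 2
        = ((a k * b k ^ 2) * a l + a k * (a l * b l ^ 2)) - ((a k * b k) * (a l * b l)
          + (a k * b k) * (a l * b l)) := by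
      intro k l; ring
    simp only [hterm, Finset.sum_sub_distrib, Finset.sum_add_distrib]
    rw [← Fintype.sum_mul_sum (fun k => a k * b k ^ 2) a,
        ← Fintype.sum_mul_sum a (fun k => a k * b k ^ 2),
        ← Fintype.sum_mul_sum (fun k => a k * b k) (fun k => a k * b k)]
    ring
  linarith [key, expand]

/-- The modified Rényi entropy `S̃(n) = log(Σ_k λ_k^n) − n·(Σ_k λ_k^n log λ_k)/(Σ_k λ_k^n)`
of a strictly positive vector `λ`, as a function of a real variable `n`
(`λ_k ^ n` denotes the real power `rpow`). -/
noncomputable def modifiedRenyi {N : ℕ} (lam : Fin N → ℝ) (n : ℝ) : ℝ :=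
  Real.log (∑ k, lam k ^ n) -
    n * (∑ k, lam k ^ n * Real.log (lam k)) / (∑ k, lam k ^ n)

/-- For a strictly positive vector `λ : Fin N → ℝ` (`N ≥ 1`), the modified
Rényi entropy `S̃` is differentiable at every `n > 0` with derivative
`S̃'(n) = −n · (Σ_{k<l} λ_k^n λ_l^n (log λ_k − log λ_l)²) / (Σ_k λ_k^n)²`. -/
theorem modifiedRenyi_hasDerivAt {N : ℕ} (hN : 1 ≤ N) (lam : Fin N → ℝ)
    (hpos : ∀ k, 0 < lam k) :
    ∀ n : ℝ, 0 < n →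
      HasDerivAt (modifiedRenyi lam)
        (-n * (∑ k, ∑ l ∈ Finset.univ.filter (fun l : Fin N => k < l),
            lam k ^ n * lam l ^ n * (Real.log (lam k) - Real.log (lam l)) ^ 2)
          / (∑ k, lam k ^ n) ^ 2) n := by
  intro n hn
  have hne : Nonempty (Fin N) := Fin.pos_iff_nonempty.1 hN
  set Z : ℝ → ℝ := fun m => ∑ k, lam k ^ m with hZdef
  set A : ℝ → ℝ := fun m => ∑ k, lam k ^ m * Real.log (lam k) with hAdef
  have hZpos : 0 < Z n := Finset.sum_pos (fun k _ => Real.rpow_pos_of_pos (hpos k) n)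
    Finset.univ_nonempty
  have hZ : HasDerivAt Z (A n) n := by
    apply HasDerivAt.fun_sum
    intro k _
    exact (Real.hasStrictDerivAt_const_rpow (hpos k) n).hasDerivAt
  have hA : HasDerivAt A (∑ k, lam k ^ n * Real.log (lam k) * Real.log (lam k)) n := by
    apply HasDerivAt.fun_sum
    intro k _
    exact ((Real.hasStrictDerivAt_const_rpow (hpos k) n).hasDerivAt).mul_const _
  set B : ℝ := ∑ k, lam k ^ n * Real.log (lam k) * Real.log (lam k) with hBdef
  have hlog : HasDerivAt (fun m => Real.log (Z m)) (A n / Z n) n := hZ.log hZpos.ne'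
  have hg : HasDerivAt (fun m => m * A m) (1 * A n + n * B) n :=
    (hasDerivAt_id n).mul hA
  have hdiv : HasDerivAt (fun m => m * A m / Z m)
      (((1 * A n + n * B) * Z n - (n * A n) * A n) / Z n ^ 2) n := hg.div hZ hZpos.ne'
  have hS : HasDerivAt (modifiedRenyi lam)
      (A n / Z n - ((1 * A n + n * B) * Z n - (n * A n) * A n) / Z n ^ 2) n := hlog.sub hdiv
  have hB' : B = ∑ k, (lam k ^ n) * (Real.log (lam k)) ^ 2 := by
    rw [hBdef]; exact Finset.sum_congr rfl fun k _ => by ring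
  have hlag : B * Z n - (A n) ^ 2
      = ∑ k, ∑ l ∈ Finset.univ.filter (fun l : Fin N => k < l),
          lam k ^ n * lam l ^ n * (Real.log (lam k) - Real.log (lam l)) ^ 2 := by
    rw [hB']
    exact lagrange_pairs (fun k => lam k ^ n) (fun k => Real.log (lam k))
  convert hS using 1
  rw [← hlag]
  rw [show (∑ k, lam k ^ n) = Z n from rfl]
  field_simp
  ring
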